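/- Let α < β be real numbers with β − α ≥ 1 and let p ∈ [2, ∞]. There exists a constant C depending only on p such that for every f ∈ H¹((α, β)), ‖f‖_{L^p((α,β))} ≤ C (‖f‖_{L²((α,β))} + ‖f‖_{L²((α,β))}^{1/2 + 1/p} ‖f'‖_{L²((α,β))}^{1/2 − 1/p}). -/

import Mathlib

open MeasureTheory Set

theorem sup_bound (α β : ℝ) (hαβ : 1 ≤ β - α) (f : ℝ → ℝ)
    (hdiff : ∀ x ∈ Ioo α β, DifferentiableAt ℝ f x)
    (hf2 : MemLp f 2 (volume.restrict (Ioo α β)))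
    (hf'2 : MemLp (deriv f) 2 (volume.restrict (Ioo α β))) :
    ∀ x ∈ Ioo α β, |f x| ≤ 2 *
      ((eLpNorm f 2 (volume.restrict (Ioo α β))).toReal +
       Real.sqrt (eLpNorm f 2 (volume.restrict (Ioo α β))).toReal *
       Real.sqrt (eLpNorm (deriv f) 2 (volume.restrict (Ioo α β))).toReal) := by
  set μ := volume.restrict (Ioo α β) with hμ
  set A := (eLpNorm f 2 μ).toReal with hA
  set B := (eLpNorm (deriv f) 2 μ).toReal with hB
  have hadd : α < β := by linarith
  have hcont : ContinuousOn f (Ioo α β) := fun x hx => (hdiff x hx).continuousAt.continuousWithinAt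
  -- A as an integral
  have hA_eq : A = (∫ x, ‖f x‖ ^ (2:ℝ) ∂μ) ^ ((2:ℝ)⁻¹) := by
    rw [hA, hf2.eLpNorm_eq_integral_rpow_norm (by norm_num) (by norm_num)]
    rw [ENNReal.toReal_ofReal (by positivity)]
    norm_num
  have hB_eq : B = (∫ x, ‖deriv f x‖ ^ (2:ℝ) ∂μ) ^ ((2:ℝ)⁻¹) := by
    rw [hB, hf'2.eLpNorm_eq_integral_rpow_norm (by norm_num) (by norm_num)]
    rw [ENNReal.toReal_ofReal (by positivity)]
    norm_num
  have hIf_nonneg : (0:ℝ) ≤ ∫ x, ‖f x‖ ^ (2:ℝ) ∂μ := by positivity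
  have hIf'_nonneg : (0:ℝ) ≤ ∫ x, ‖deriv f x‖ ^ (2:ℝ) ∂μ := by positivity
  have hA0 : 0 ≤ A := ENNReal.toReal_nonneg
  have hB0 : 0 ≤ B := ENNReal.toReal_nonneg
  have hA_sq : ∫ x, ‖f x‖ ^ (2:ℝ) ∂μ = A ^ (2:ℝ) := by
    rw [hA_eq, ← Real.rpow_mul hIf_nonneg]; norm_num
  -- Hölder : ∫ |f| |f'| ≤ A * B
  have holder : ∫ x, |f x| * |deriv f x| ∂μ ≤ A * B := by
    have h2 : ENNReal.ofReal (2:ℝ) = 2 := by norm_num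
    have hcj : Real.HolderConjugate 2 2 := ⟨by norm_num, by norm_num, by norm_num⟩
    have hmf : MemLp (fun x => |f x|) (ENNReal.ofReal 2) μ := by
      rw [h2]; exact hf2.norm
    have hmf' : MemLp (fun x => |deriv f x|) (ENNReal.ofReal 2) μ := by
      rw [h2]; exact hf'2.norm
    have key := integral_mul_le_Lp_mul_Lq_of_nonneg (μ := μ) hcj
      (Filter.Eventually.of_forall fun x => abs_nonneg _)
      (Filter.Eventually.of_forall fun x => abs_nonneg _) hmf hmf'
    calc ∫ x, |f x| * |deriv f x| ∂μ
        ≤ (∫ x, |f x| ^ (2:ℝ) ∂μ) ^ ((1:ℝ)/2) * (∫ x, |deriv f x| ^ (2:ℝ) ∂μ) ^ ((1:ℝ)/2) := key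
      _ = A * B := by
          rw [hA_eq, hB_eq]
          simp [Real.norm_eq_abs, one_div]
  -- integrability of f^2 on Ioo
  have hsq_int : IntegrableOn (fun y => f y ^ 2) (Ioo α β) volume := by
    have h1 : Integrable (fun x => ‖f x‖ ^ (2:ℝ)) μ :=
      hf2.integrable_norm_rpow (by norm_num) (by norm_num)
    have heq : (fun y => f y ^ 2) = (fun x => ‖f x‖ ^ (2:ℝ)) := by
      funext x
      rw [Real.rpow_two, Real.norm_eq_abs, sq_abs]
    rw [hμ] at h1
    rw [heq]
    exact h1
  -- a point where f² is small
  set K : Set ℝ := Icc (α + 4⁻¹) (α + 2⁻¹) with hK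
  have hKsub : K ⊆ Ioo α β := fun y hy => ⟨by have := hy.1; linarith, by have := hy.2; linarith⟩
  obtain ⟨y₀, hy₀K, hy₀min⟩ :=
    isCompact_Icc.exists_isMinOn (s := K) (by rw [hK]; exact Set.nonempty_Icc.mpr (by linarith))
      ((hcont.mono hKsub).pow 2)
  have hy₀ : y₀ ∈ Ioo α β := hKsub hy₀K
  have hy₀_bound : f y₀ ^ 2 ≤ 4 * A ^ 2 := by
    have hle : f y₀ ^ 2 * (volume K).toReal ≤ ∫ y in K, f y ^ 2 := by
      refine setIntegral_ge_of_const_le_real measurableSet_Icc ?_ (fun x hx => hy₀min hx)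
        (hsq_int.mono_set hKsub)
      rw [hK, Real.volume_Icc]; exact ENNReal.ofReal_ne_top
    have hKvol : (volume K).toReal = 4⁻¹ := by
      rw [hK, Real.volume_Icc, ENNReal.toReal_ofReal (by norm_num)]; norm_num
    have hle2 : ∫ y in K, f y ^ 2 ≤ ∫ y in Ioo α β, f y ^ 2 := by
      refine setIntegral_mono_set hsq_int ?_ (HasSubset.Subset.eventuallyLE hKsub)
      exact Filter.Eventually.of_forall fun y => sq_nonneg _
    have hIoo : ∫ y in Ioo α β, f y ^ 2 = A ^ 2 := by
      have : ∫ y in Ioo α β, f y ^ 2 = ∫ x, ‖f x‖ ^ (2:ℝ) ∂μ := by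
        rw [hμ]
        refine setIntegral_congr_fun measurableSet_Ioo fun x _ => ?_
        rw [Real.rpow_two, Real.norm_eq_abs, sq_abs]
      rw [this, hA_sq, Real.rpow_two]
    rw [hKvol] at hle
    rw [hIoo] at hle2
    nlinarith
  intro x hx
  -- integrability of f * f' on Ioo
  have hmul : IntegrableOn (fun t => f t * deriv f t) (Ioo α β) volume := by
    have h1 : MemLp (f • deriv f) 1 μ :=
      hf'2.smul hf2
    have h2 := memLp_one_iff_integrable.mp h1
    rw [hμ] at h2
    exact h2
  have habs_int : IntegrableOn (fun t => |2 * f t * deriv f t|) (Ioo α β) volume := by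
    simpa only [mul_assoc, IntegrableOn] using (hmul.const_mul 2).abs
  have hsub : uIcc y₀ x ⊆ Ioo α β := Set.ordConnected_Ioo.uIcc_subset hy₀ hx
  have hftc : ∫ t in y₀..x, (2 * f t * deriv f t) = f x ^ 2 - f y₀ ^ 2 := by
    apply intervalIntegral.integral_eq_sub_of_hasDerivAt
    · intro t ht
      have hd := (hdiff t (hsub ht)).hasDerivAt
      simpa [mul_comm, mul_assoc] using hd.fun_pow 2
    · rw [intervalIntegrable_iff]
      refine IntegrableOn.mono_set ?_ ((Set.uIoc_subset_uIcc).trans hsub)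
      simpa only [mul_assoc, IntegrableOn] using hmul.const_mul 2
  have hbound : |∫ t in y₀..x, 2 * f t * deriv f t| ≤ 2 * (A * B) := by
    have hstep1 : |∫ t in y₀..x, 2 * f t * deriv f t| ≤
        ∫ t in Set.uIoc y₀ x, |2 * f t * deriv f t| := by
      simpa only [Real.norm_eq_abs] using
        intervalIntegral.norm_integral_le_integral_norm_uIoc
          (f := fun t => 2 * f t * deriv f t) (a := y₀) (b := x) (μ := volume)
    have hstep2 : ∫ t in Set.uIoc y₀ x, |2 * f t * deriv f t| ≤
        ∫ t in Ioo α β, |2 * f t * deriv f t| := by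
      refine setIntegral_mono_set habs_int
        (Filter.Eventually.of_forall fun t => abs_nonneg _)
        (HasSubset.Subset.eventuallyLE ((Set.uIoc_subset_uIcc).trans hsub))
    have hstep3 : ∫ t in Ioo α β, |2 * f t * deriv f t| = 2 * ∫ t in Ioo α β, |f t| * |deriv f t| := by
      rw [← integral_const_mul]
      refine setIntegral_congr_fun measurableSet_Ioo fun t _ => ?_
      rw [abs_mul, abs_mul, abs_two]
      ring
    have hstep4 : ∫ t in Ioo α β, |f t| * |deriv f t| ≤ A * B := by
      rw [hμ] at holder; exact holder
    calc |∫ t in y₀..x, 2 * f t * deriv f t| ≤ _ := hstep1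
      _ ≤ _ := hstep2
      _ = _ := hstep3
      _ ≤ 2 * (A * B) := by linarith
  have hfx2 : f x ^ 2 ≤ 4 * A ^ 2 + 2 * (A * B) := by
    have h1 : f x ^ 2 - f y₀ ^ 2 ≤ 2 * (A * B) :=
      le_trans (le_abs_self _) (hftc ▸ hbound)
    linarith
  have hM : (0:ℝ) ≤ 2 * (A + Real.sqrt A * Real.sqrt B) := by positivity
  have hsq : f x ^ 2 ≤ (2 * (A + Real.sqrt A * Real.sqrt B)) ^ 2 := by
    have hsA : Real.sqrt A ^ 2 = A := Real.sq_sqrt hA0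
    have hsB : Real.sqrt B ^ 2 = B := Real.sq_sqrt hB0
    nlinarith [Real.sqrt_nonneg A, Real.sqrt_nonneg B, mul_nonneg hA0 hB0,
      mul_nonneg (mul_nonneg hA0 (Real.sqrt_nonneg A)) (Real.sqrt_nonneg B)]
  calc |f x| = Real.sqrt (f x ^ 2) := (Real.sqrt_sq_eq_abs _).symm
    _ ≤ Real.sqrt ((2 * (A + Real.sqrt A * Real.sqrt B)) ^ 2) := Real.sqrt_le_sqrt hsq
    _ = 2 * (A + Real.sqrt A * Real.sqrt B) := Real.sqrt_sq hM
theorem rpow_add_le_aux (a b q : ℝ) (ha : 0 ≤ a) (hb : 0 ≤ b) (hq0 : 0 ≤ q) (hq1 : q ≤ 1) :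
    (a + b) ^ q ≤ a ^ q + b ^ q := by
  lift a to NNReal using ha
  lift b to NNReal using hb
  have := NNReal.rpow_add_le_add_rpow a b hq0 hq1
  exact_mod_cast this

/-- Gagliardo–Nirenberg type interpolation inequality on an interval `(α, β)` with
`β - α ≥ 1`: for `2 ≤ p ≤ ∞` there is a constant `C` depending only on `p` such that
`‖f‖_{L^p} ≤ C (‖f‖_{L²} + ‖f‖_{L²}^{1/2+1/p} ‖f'‖_{L²}^{1/2-1/p})` for all
`f ∈ H¹((α,β))`.  (For `p = ∞` the exponent `1/p` is interpreted as `0`.) -/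
theorem stmt1 (p : ENNReal) (hp : 2 ≤ p) :
    ∃ C : ℝ, 0 < C ∧ ∀ α β : ℝ, 1 ≤ β - α → ∀ f : ℝ → ℝ,
      (∀ x ∈ Ioo α β, DifferentiableAt ℝ f x) →
      MemLp f 2 (volume.restrict (Ioo α β)) →
      MemLp (deriv f) 2 (volume.restrict (Ioo α β)) →
      (eLpNorm f p (volume.restrict (Ioo α β))).toReal ≤
        C * ((eLpNorm f 2 (volume.restrict (Ioo α β))).toReal +
          (eLpNorm f 2 (volume.restrict (Ioo α β))).toReal ^ ((1 : ℝ) / 2 + 1 / p.toReal) *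
          (eLpNorm (deriv f) 2 (volume.restrict (Ioo α β))).toReal ^
            ((1 : ℝ) / 2 - 1 / p.toReal)) := by
  refine ⟨4, by norm_num, ?_⟩
  intro α β hαβ f hdiff hf2 hf'2
  set μ := volume.restrict (Ioo α β) with hμ
  set A := (eLpNorm f 2 μ).toReal with hA
  set B := (eLpNorm (deriv f) 2 μ).toReal with hB
  have hA0 : 0 ≤ A := ENNReal.toReal_nonneg
  have hB0 : 0 ≤ B := ENNReal.toReal_nonneg
  set s : ℝ := Real.sqrt A * Real.sqrt B with hs
  have hs0 : 0 ≤ s := by positivity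
  set M : ℝ := 2 * (A + s) with hM
  have hM0 : 0 ≤ M := by positivity
  have hbd := sup_bound α β hαβ f hdiff hf2 hf'2
  haveI hfin : IsFiniteMeasure μ := by
    constructor
    rw [hμ, Measure.restrict_apply_univ, Real.volume_Ioo]
    exact ENNReal.ofReal_lt_top
  have hae : ∀ᵐ x ∂μ, ‖f x‖ ≤ M := by
    rw [hμ]
    filter_upwards [ae_restrict_mem measurableSet_Ioo] with x hx
    rw [Real.norm_eq_abs]
    exact hbd x hx
  -- exponents via sqrt
  have hsqrtA : Real.sqrt A = A ^ ((1:ℝ)/2) := Real.sqrt_eq_rpow A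
  have hsqrtB : Real.sqrt B = B ^ ((1:ℝ)/2) := Real.sqrt_eq_rpow B
  by_cases hptop : p = ⊤
  · subst hptop
    have h1 : eLpNorm f ⊤ μ ≤ ENNReal.ofReal M := by
      rw [eLpNorm_exponent_top]
      exact eLpNormEssSup_le_of_ae_bound hae
    have h2 : (eLpNorm f ⊤ μ).toReal ≤ M :=
      le_trans (ENNReal.toReal_mono ENNReal.ofReal_ne_top h1)
        (le_of_eq (ENNReal.toReal_ofReal hM0))
    refine le_trans h2 ?_
    simp only [ENNReal.toReal_top, div_zero, add_zero, sub_zero]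
    rw [← hsqrtA, ← hsqrtB]
    nlinarith
  · -- finite p
    set r : ℝ := p.toReal with hr
    have hp0 : p ≠ 0 := by
      intro h; rw [h] at hp; exact absurd hp (by norm_num)
    have hr2 : 2 ≤ r := by
      rw [hr]
      have := ENNReal.toReal_mono hptop hp
      simpa using this
    have hr0 : 0 < r := by linarith
    have hmemtop : MemLp f ⊤ μ := memLp_top_of_bound hf2.1 M hae
    have hmemp : MemLp f p μ := hmemtop.mono_exponent le_top
    have heq : (eLpNorm f p μ).toReal = (∫ x, ‖f x‖ ^ r ∂μ) ^ r⁻¹ := by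
      rw [hmemp.eLpNorm_eq_integral_rpow_norm hp0 hptop,
        ENNReal.toReal_ofReal (by positivity)]
    -- pointwise bound
    have hA_sq : ∫ x, ‖f x‖ ^ (2:ℝ) ∂μ = A ^ (2:ℝ) := by
      have hA_eq : A = (∫ x, ‖f x‖ ^ (2:ℝ) ∂μ) ^ ((2:ℝ)⁻¹) := by
        rw [hA, hf2.eLpNorm_eq_integral_rpow_norm (by norm_num) (by norm_num)]
        rw [ENNReal.toReal_ofReal (by positivity)]
        norm_num
      have hnn : (0:ℝ) ≤ ∫ x, ‖f x‖ ^ (2:ℝ) ∂μ := by positivity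
      rw [hA_eq, ← Real.rpow_mul hnn]; norm_num
    have hint : ∫ x, ‖f x‖ ^ r ∂μ ≤ M ^ (r - 2) * A ^ (2:ℝ) := by
      have hptw : ∀ᵐ x ∂μ, ‖f x‖ ^ r ≤ M ^ (r - 2) * ‖f x‖ ^ (2:ℝ) := by
        filter_upwards [hae] with x hx
        have h1 : ‖f x‖ ^ r = ‖f x‖ ^ (r - 2) * ‖f x‖ ^ (2:ℝ) := by
          rw [← Real.rpow_add_of_nonneg (norm_nonneg _) (by linarith) (by norm_num)]
          ring_nf
        rw [h1]
        refine mul_le_mul_of_nonneg_right ?_ (by positivity)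
        exact Real.rpow_le_rpow (norm_nonneg _) hx (by linarith)
      have hint1 : Integrable (fun x => ‖f x‖ ^ r) μ := by
        have := hmemp.integrable_norm_rpow hp0 hptop
        rwa [← hr] at this
      have hint2 : Integrable (fun x => M ^ (r - 2) * ‖f x‖ ^ (2:ℝ)) μ := by
        refine Integrable.const_mul ?_ _
        have := hf2.integrable_norm_rpow (by norm_num) (by norm_num)
        simpa using this
      calc ∫ x, ‖f x‖ ^ r ∂μ ≤ ∫ x, M ^ (r - 2) * ‖f x‖ ^ (2:ℝ) ∂μ :=
            integral_mono_ae hint1 hint2 hptw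
        _ = M ^ (r - 2) * A ^ (2:ℝ) := by rw [integral_const_mul, hA_sq]
    set θ : ℝ := (r - 2) / r with hθ
    have hθ0 : 0 ≤ θ := div_nonneg (by linarith) hr0.le
    have hθ1 : θ ≤ 1 := by
      rw [hθ, div_le_one hr0]; linarith
    have hchain : (∫ x, ‖f x‖ ^ r ∂μ) ^ r⁻¹ ≤ M ^ θ * A ^ (2 / r) := by
      have hnn : (0:ℝ) ≤ ∫ x, ‖f x‖ ^ r ∂μ := by positivity
      calc (∫ x, ‖f x‖ ^ r ∂μ) ^ r⁻¹ ≤ (M ^ (r - 2) * A ^ (2:ℝ)) ^ r⁻¹ :=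
            Real.rpow_le_rpow hnn hint (by positivity)
        _ = M ^ θ * A ^ (2 / r) := by
            rw [Real.mul_rpow (by positivity) (by positivity),
              ← Real.rpow_mul hM0, ← Real.rpow_mul hA0]
            rw [hθ]
            ring_nf
    -- algebra on M ^ θ
    have hMθ : M ^ θ ≤ 2 * (A ^ θ + s ^ θ) := by
      rw [hM, Real.mul_rpow (by norm_num) (by positivity)]
      have h2θ : (2:ℝ) ^ θ ≤ 2 := by
        calc (2:ℝ) ^ θ ≤ (2:ℝ) ^ (1:ℝ) :=
              Real.rpow_le_rpow_of_exponent_le one_le_two hθ1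
          _ = 2 := Real.rpow_one 2
      refine mul_le_mul h2θ (rpow_add_le_aux A s θ hA0 hs0 hθ0 hθ1) (by positivity) (by norm_num)
    have hfinal : M ^ θ * A ^ (2 / r) ≤
        2 * (A + A ^ ((1:ℝ)/2 + 1/r) * B ^ ((1:ℝ)/2 - 1/r)) := by
      have hterm1 : A ^ θ * A ^ (2 / r) = A := by
        rw [← Real.rpow_add_of_nonneg hA0 hθ0 (by positivity)]
        have : θ + 2 / r = 1 := by rw [hθ]; field_simp; ring
        rw [this, Real.rpow_one]
      have hsθ : s ^ θ = A ^ (θ / 2) * B ^ (θ / 2) := by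
        rw [hs, Real.mul_rpow (Real.sqrt_nonneg _) (Real.sqrt_nonneg _),
          hsqrtA, hsqrtB, ← Real.rpow_mul hA0, ← Real.rpow_mul hB0]
        ring_nf
      have hterm2 : s ^ θ * A ^ (2 / r) = A ^ ((1:ℝ)/2 + 1/r) * B ^ ((1:ℝ)/2 - 1/r) := by
        rw [hsθ]
        have e1 : θ / 2 + 2 / r = (1:ℝ)/2 + 1/r := by rw [hθ]; field_simp; ring
        have hrne : r ≠ 0 := ne_of_gt hr0
        have e2 : θ / 2 = (1:ℝ)/2 - 1/r := by
          rw [hθ, div_div, div_sub_div _ _ two_ne_zero hrne]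
          ring_nf
        rw [mul_right_comm, ← Real.rpow_add_of_nonneg hA0 (by positivity) (by positivity),
          e1, e2]
      calc M ^ θ * A ^ (2 / r) ≤ 2 * (A ^ θ + s ^ θ) * A ^ (2 / r) :=
            mul_le_mul_of_nonneg_right hMθ (by positivity)
        _ = 2 * (A ^ θ * A ^ (2 / r) + s ^ θ * A ^ (2 / r)) := by ring
        _ = 2 * (A + A ^ ((1:ℝ)/2 + 1/r) * B ^ ((1:ℝ)/2 - 1/r)) := by
            rw [hterm1, hterm2]
    rw [heq]
    refine le_trans hchain (le_trans hfinal ?_)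
    have h0 : (0:ℝ) ≤ A ^ ((1:ℝ)/2 + 1/r) * B ^ ((1:ℝ)/2 - 1/r) := by positivity
    linarith
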